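/- Let s ∈ ℝ with s² ≠ 1, let p : ℝ → ℝ, and fix constants A⁰ = −s·T⁰⁰(ρ_R,p(ρ_R),u_R) + T⁰¹(ρ_R,p(ρ_R),u_R) and A¹ = −s·T⁰¹(ρ_R,p(ρ_R),u_R) + T¹¹(ρ_R,p(ρ_R),u_R) for given reals ρ_R, u_R. Let ρ, u : ℝ → ℝ with u differentiable and v(u(ζ)) ≠ s for all ζ, and set F⁰(ζ) = −s·T⁰⁰(ρ(ζ),p(ρ(ζ)),u(ζ)) + T⁰¹(ρ(ζ),p(ρ(ζ)),u(ζ)) and F¹(ζ) = −s·T⁰¹(ρ(ζ),p(ρ(ζ)),u(ζ)) + T¹¹(ρ(ζ),p(ρ(ζ)),u(ζ)). Then the following are equivalent: (i) for every ζ, the function ζ ↦ √(1+u(ζ)²) has derivative (F⁰(ζ) − A⁰)/(1−s²) at ζ and u has derivative (F¹(ζ) − A¹)/(1−s²) at ζ; (ii) for every ζ, ρ(ζ) = (v(u(ζ))·A¹ − A⁰)/(s − v(u(ζ))) and u has derivative (F¹(ζ) − A¹)/(1−s²) at ζ. -/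

import Mathlib

/-- Component `T⁰⁰` of the relativistic perfect-fluid energy–momentum tensor in one
spatial dimension with 4-velocity `(√(1+u²), u)`. -/
noncomputable def T00 (ρ P u : ℝ) : ℝ := (P + ρ) * (1 + u ^ 2) - P

/-- Component `T⁰¹` of the relativistic perfect-fluid energy–momentum tensor. -/
noncomputable def T01 (ρ P u : ℝ) : ℝ := (P + ρ) * u * Real.sqrt (1 + u ^ 2)

/-- Component `T¹¹` of the relativistic perfect-fluid energy–momentum tensor. -/
noncomputable def T11 (ρ P u : ℝ) : ℝ := (P + ρ) * u ^ 2 + P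

/-- The classical fluid velocity `v(u) = u/√(1+u²)`. -/
noncomputable def vel (u : ℝ) : ℝ := u / Real.sqrt (1 + u ^ 2)

lemma key_identity (s ρ P u : ℝ) :
    (-s * T00 ρ P u + T01 ρ P u) - vel u * (-s * T01 ρ P u + T11 ρ P u)
      = (vel u - s) * ρ := by
  have h1 : (0:ℝ) < 1 + u ^ 2 := by positivity
  have hr : Real.sqrt (1 + u ^ 2) ≠ 0 := by positivity
  have hr2 : Real.sqrt (1 + u ^ 2) ^ 2 = 1 + u ^ 2 := Real.sq_sqrt h1.le
  unfold T00 T01 T11 vel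
  field_simp
  linear_combination ((P + ρ) * u) * hr2

lemma sqrt_chain (u : ℝ → ℝ) (ζ u' : ℝ) (h : HasDerivAt u u' ζ) :
    HasDerivAt (fun z => Real.sqrt (1 + u z ^ 2)) (vel (u ζ) * u') ζ := by
  have h1 : (0:ℝ) < 1 + u ζ ^ 2 := by positivity
  have hd : HasDerivAt (fun z => 1 + u z ^ 2) (2 * u ζ * u') ζ := by
    exact ((hasDerivAt_const ζ (1:ℝ)).add ((h.pow 2).congr_deriv (show _ = 2 * u ζ * u' by ring))).congr_deriv (by ring)
  have := hd.sqrt (ne_of_gt h1)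
  convert this using 1
  rw [vel]
  have hr : Real.sqrt (1 + u ζ ^ 2) ≠ 0 := by positivity
  field_simp

/-- The two-component travelling-wave profile equations for the RAV Euler equations with
shock speed `s` are equivalent to an explicit density formula together with a single
scalar ODE for `u`. -/
theorem profile_system_reduction (s : ℝ) (hs : s ^ 2 ≠ 1) (p : ℝ → ℝ) (ρR uR : ℝ)
    (ρ u : ℝ → ℝ) (hu : Differentiable ℝ u) (hv : ∀ ζ : ℝ, vel (u ζ) ≠ s) :
    let A0 : ℝ := -s * T00 ρR (p ρR) uR + T01 ρR (p ρR) uR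
    let A1 : ℝ := -s * T01 ρR (p ρR) uR + T11 ρR (p ρR) uR
    let F0 : ℝ → ℝ := fun ζ =>
      -s * T00 (ρ ζ) (p (ρ ζ)) (u ζ) + T01 (ρ ζ) (p (ρ ζ)) (u ζ)
    let F1 : ℝ → ℝ := fun ζ =>
      -s * T01 (ρ ζ) (p (ρ ζ)) (u ζ) + T11 (ρ ζ) (p (ρ ζ)) (u ζ)
    ((∀ ζ : ℝ,
        HasDerivAt (fun z => Real.sqrt (1 + u z ^ 2)) ((F0 ζ - A0) / (1 - s ^ 2)) ζ ∧
        HasDerivAt u ((F1 ζ - A1) / (1 - s ^ 2)) ζ) ↔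
      (∀ ζ : ℝ,
        ρ ζ = (vel (u ζ) * A1 - A0) / (s - vel (u ζ)) ∧
        HasDerivAt u ((F1 ζ - A1) / (1 - s ^ 2)) ζ)) := by
  intro A0 A1 F0 F1
  have hs1 : (1 : ℝ) - s ^ 2 ≠ 0 := by
    intro h; exact hs (by linarith)
  constructor
  · intro h ζ
    obtain ⟨h0, h1⟩ := h ζ
    refine ⟨?_, h1⟩
    have hc := sqrt_chain u ζ _ h1
    have heq := h0.unique hc
    have hsv : s - vel (u ζ) ≠ 0 := fun h => (hv ζ) (by linarith [sub_eq_zero.mp h])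
    have hk := key_identity s (ρ ζ) (p (ρ ζ)) (u ζ)
    have heq2 : F0 ζ - A0 = vel (u ζ) * (F1 ζ - A1) := by
      field_simp at heq
      linarith [heq]
    field_simp
    simp only [F0, F1] at heq2
    linear_combination -heq2 + hk
  · intro h ζ
    obtain ⟨hρ, h1⟩ := h ζ
    refine ⟨?_, h1⟩
    have hsv : s - vel (u ζ) ≠ 0 := fun h => (hv ζ) (by linarith [sub_eq_zero.mp h])
    have hk := key_identity s (ρ ζ) (p (ρ ζ)) (u ζ)
    have hρ' : (s - vel (u ζ)) * ρ ζ = vel (u ζ) * A1 - A0 := by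
      rw [hρ]; field_simp
    have heq2 : F0 ζ - A0 = vel (u ζ) * (F1 ζ - A1) := by
      simp only [F0, F1]
      linear_combination hk - hρ'
    have hc := sqrt_chain u ζ _ h1
    convert hc using 1
    rw [heq2]; ring
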